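/- For every integer n ≥ 3 there exists a polynomial π_n with rational coefficients in variables X₀, X₁, …, X_{n−3} such that: (i) for every smooth θ : ℝ → ℝ and every x ∈ ℝ, 𝒮_n^θ(x) = π_n(θ(x), θ'(x), …, θ^{(n−3)}(x)); and (ii) π_n is isobaric of weight n−1, i.e. the identity π_n(λ²·X₀, λ³·X₁, …, λ^{n−1}·X_{n−3}) = λ^{n−1}·π_n(X₀, X₁, …, X_{n−3}) holds identically in λ and the variables X_i. -/

import Mathlib

noncomputable section

/-- `g_R(t) = -(R/π)·log(1 - (π/R)·t)`. -/
def gR (R t : ℝ) : ℝ := -(R / Real.pi) * Real.log (1 - (Real.pi / R) * t)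

/-- `f` is a (smooth) solution of `f'' + θ·f = 0`. -/
def IsSolution (θ f : ℝ → ℝ) : Prop :=
  ContDiff ℝ (⊤ : ℕ∞) f ∧ ∀ t, deriv (deriv f) t + θ t * f t = 0

/-- `f₁, f₂` is the fundamental pair of solutions of `f'' + θ·f = 0` at `x`:
`f₁(x) = f₂'(x) = 1`, `f₂(x) = f₁'(x) = 0`. -/
def IsFundPair (θ : ℝ → ℝ) (x : ℝ) (f₁ f₂ : ℝ → ℝ) : Prop :=
  IsSolution θ f₁ ∧ IsSolution θ f₂ ∧
  f₁ x = 1 ∧ deriv f₁ x = 0 ∧ f₂ x = 0 ∧ deriv f₂ x = 1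

/-- The `n`-th `g_R`-Schwarzian `𝒮_n^{θ,g_R}(x)`, computed from the fundamental pair
`f₁, f₂` at `x`: the `n`-th derivative at `t = 0` of `t ↦ h_x(x + g_R(t))`,
where `h_x = f₂/f₁`. -/
def SchR (R x : ℝ) (f₁ f₂ : ℝ → ℝ) (n : ℕ) : ℝ :=
  iteratedDeriv n (fun t => f₂ (x + gR R t) / f₁ (x + gR R t)) 0

/-- The determinant `𝒟_n^{θ,g_R}(x)` of the `n×n` Hankel matrix with `(i,j)` entry
`𝒮_{i+j-1}^{θ,g_R}(x)/(i+j-1)!`. -/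
def DetR (R x : ℝ) (f₁ f₂ : ℝ → ℝ) (n : ℕ) : ℝ :=
  (Matrix.of fun i j : Fin n =>
    SchR R x f₁ f₂ (i.1 + j.1 + 1) / (Nat.factorial (i.1 + j.1 + 1) : ℝ)).det

/-- Hypothesis (H_R): `f₁, f₂` are linearly independent solutions of `f'' + θ·f = 0`
(constant Wronskian `W = f₁f₂' - f₁'f₂ ≠ 0`) and `h = f₂/f₁` admits a meromorphic
extension `H` to the strip `{|Im z| < R}` (holomorphic off the real zeros of `f₁`,
with poles at those zeros) which satisfies `W·Im H(z)·Im z > 0` for `0 < Im z < R`. -/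
def HypR (θ : ℝ → ℝ) (R : ℝ) : Prop :=
  ∃ (f₁ f₂ : ℝ → ℝ) (H : ℂ → ℂ),
    IsSolution θ f₁ ∧ IsSolution θ f₂ ∧
    f₁ 0 * deriv f₂ 0 - deriv f₁ 0 * f₂ 0 ≠ 0 ∧
    (∀ t : ℝ, f₁ t ≠ 0 → H t = ((f₂ t / f₁ t : ℝ) : ℂ)) ∧
    DifferentiableOn ℂ H
      {z : ℂ | |z.im| < R ∧ ∀ t : ℝ, f₁ t = 0 → z ≠ (t : ℂ)} ∧
    (∀ t : ℝ, f₁ t = 0 →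
      Filter.Tendsto (fun z => ‖H z‖) (nhdsWithin (t : ℂ) {(t : ℂ)}ᶜ) Filter.atTop) ∧
    (∀ z : ℂ, 0 < z.im → z.im < R →
      0 < (f₁ 0 * deriv f₂ 0 - deriv f₁ 0 * f₂ 0) * (H z).im * z.im)

/-- `(i,j)` entry (1-based, clamped to ℕ) of the matrix `T(f,n)(t)`:
`f^{(j-i)}(t)/(j-i)!` if `i ≤ j`, and `0` otherwise. -/
def Tentry (f : ℝ → ℝ) (t : ℝ) (i j : ℕ) : ℝ :=
  if i ≤ j then iteratedDeriv (j - i) f t / (Nat.factorial (j - i) : ℝ) else 0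

end

noncomputable section
namespace Stmt8Aux

open MvPolynomial

inductive Var : Type
  | vA : Var
  | vV : Var
  | vB : Var
  | vC : ℕ → Var

open Var

/-- weights -/
def wt : Var → ℕ
  | vA => 0
  | vV => 0
  | vB => 1
  | vC r => r + 2

/-- formal derivatives of the variables -/
def dX : Var → MvPolynomial Var ℚ
  | vA => X vB
  | vV => -(X vB * X vV ^ 2)
  | vB => -(X (vC 0) * X vA)
  | vC r => X (vC (r + 1))

def D : Derivation ℚ (MvPolynomial Var ℚ) (MvPolynomial Var ℚ) := mkDerivation ℚ dX

@[simp] lemma D_X (v : Var) : D (X v) = dX v := by simp [D]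

def P : ℕ → MvPolynomial Var ℚ
  | 0 => X vV ^ 2
  | k + 1 => D (P k)

lemma homog_pow {τ : Type*} {w : τ → ℕ} {p : MvPolynomial τ ℚ} {m : ℕ}
    (hp : IsWeightedHomogeneous w p m) (k : ℕ) :
    IsWeightedHomogeneous w (p ^ k) (k * m) := by
  induction k with
  | zero => simpa using isWeightedHomogeneous_one ℚ w
  | succ k ih =>
    rw [pow_succ, Nat.succ_mul]
    exact ih.mul hp

lemma dX_homog (v : Var) : IsWeightedHomogeneous wt (dX v) (wt v + 1) := by
  cases v with
  | vA => exact isWeightedHomogeneous_X ℚ wt vB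
  | vV =>
    exact (weightedHomogeneousSubmodule ℚ wt 1).neg_mem
      ((isWeightedHomogeneous_X ℚ wt vB).mul (homog_pow (isWeightedHomogeneous_X ℚ wt vV) 2))
  | vB =>
    exact (weightedHomogeneousSubmodule ℚ wt 2).neg_mem
      ((isWeightedHomogeneous_X ℚ wt (vC 0)).mul (isWeightedHomogeneous_X ℚ wt vA))
  | vC r => exact isWeightedHomogeneous_X ℚ wt (vC (r + 1))

lemma weight_sub_single {d : Var →₀ ℕ} {i : Var} (hi : i ∈ d.support) :
    Finsupp.weight wt (d - Finsupp.single i 1) + wt i = Finsupp.weight wt d := by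
  have h1 : Finsupp.single i 1 ≤ d := by
    rw [Finsupp.single_le_iff]
    exact Nat.one_le_iff_ne_zero.mpr (Finsupp.mem_support_iff.mp hi)
  have h2 : d - Finsupp.single i 1 + Finsupp.single i 1 = d := tsub_add_cancel_of_le h1
  have h3 : Finsupp.weight wt (Finsupp.single i 1) = wt i := by
    simp [Finsupp.weight_apply, Finsupp.sum_single_index]
  calc Finsupp.weight wt (d - Finsupp.single i 1) + wt i
      = Finsupp.weight wt (d - Finsupp.single i 1) + Finsupp.weight wt (Finsupp.single i 1) := by
        rw [h3]
    _ = Finsupp.weight wt (d - Finsupp.single i 1 + Finsupp.single i 1) := (map_add _ _ _).symm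
    _ = Finsupp.weight wt d := by rw [h2]

lemma D_homog {p : MvPolynomial Var ℚ} {m : ℕ} (hp : IsWeightedHomogeneous wt p m) :
    IsWeightedHomogeneous wt (D p) (m + 1) := by
  conv_lhs => rw [p.as_sum]
  rw [map_sum]
  apply IsWeightedHomogeneous.sum
  intro d hd
  have hdm : Finsupp.weight wt d = m := hp (mem_support_iff.mp hd)
  rw [show D = mkDerivation ℚ dX from rfl, mkDerivation_monomial]
  apply (weightedHomogeneousSubmodule ℚ wt (m + 1)).smul_mem
  rw [Finsupp.sum]
  apply IsWeightedHomogeneous.sum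
  intro i hi
  rw [smul_eq_mul]
  have h := (isWeightedHomogeneous_monomial wt (d - Finsupp.single i 1)
    ((d i : ℚ)) rfl).mul (dX_homog i)
  have he : Finsupp.weight wt (d - Finsupp.single i 1) + (wt i + 1) = m + 1 := by
    rw [← add_assoc, weight_sub_single hi, hdm]
  rwa [he] at h

lemma P_homog (k : ℕ) : IsWeightedHomogeneous wt (P k) k := by
  induction k with
  | zero => simpa [P, wt] using homog_pow (isWeightedHomogeneous_X ℚ wt vV) 2
  | succ k ih => exact D_homog ih

/-- chain rule for evaluation of polynomials along a path -/
lemma hasDerivAt_aeval (s : ℝ → Var → ℝ) (t : ℝ)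
    (hs : ∀ v, HasDerivAt (fun y => s y v) (aeval (s t) (dX v)) t) (p : MvPolynomial Var ℚ) :
    HasDerivAt (fun y => aeval (s y) p) (aeval (s t) (D p)) t := by
  induction p using MvPolynomial.induction_on with
  | C a =>
    have h0 : D (C a : MvPolynomial Var ℚ) = 0 := by
      rw [← MvPolynomial.algebraMap_eq]; exact Derivation.map_algebraMap D a
    simp only [aeval_C, h0, map_zero]
    exact hasDerivAt_const t _
  | add p q hp hq =>
    simp only [map_add]
    exact hp.add hq
  | mul_X p i hp =>
    simp only [map_mul, aeval_X, Derivation.leibniz, D_X, smul_eq_mul, map_add]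
    have := hp.fun_mul (hs i)
    refine this.congr_deriv ?_
    ring

/-- evaluations of a weighted-homogeneous polynomial agree if the assignments agree on
variables of admissible weight -/
lemma aeval_congr_wt {p : MvPolynomial Var ℚ} {m : ℕ} (hp : IsWeightedHomogeneous wt p m)
    (s s' : Var → ℝ) (h : ∀ v, wt v ≤ m → s v = s' v) : aeval s p = aeval s' p := by
  rw [aeval_def, aeval_def, eval₂_eq, eval₂_eq]
  apply Finset.sum_congr rfl
  intro d hd
  congr 1
  apply Finset.prod_congr rfl
  intro v hv
  have hdm : Finsupp.weight wt d = m := hp (mem_support_iff.mp hd)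
  have h1 : d v • wt v ≤ Finsupp.weight wt d := by
    rw [Finsupp.weight_apply, Finsupp.sum]
    exact Finset.single_le_sum (f := fun i => d i • wt i) (fun i _ => Nat.zero_le _) hv
  have h2 : wt v ≤ m := by
    refine le_trans ?_ (hdm ▸ h1)
    have : 1 ≤ d v := Nat.one_le_iff_ne_zero.mpr (Finsupp.mem_support_iff.mp hv)
    calc wt v = 1 * wt v := (one_mul _).symm
      _ ≤ d v * wt v := Nat.mul_le_mul_right _ this
      _ = d v • wt v := by rw [smul_eq_mul]
  rw [h v h2]

/-- substituting weighted-homogeneous polynomials into a weighted-homogeneous polynomial -/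
lemma aeval_homog_poly {τ : Type*} (g : Var → MvPolynomial τ ℚ) (w' : τ → ℕ)
    (hg : ∀ v, IsWeightedHomogeneous w' (g v) (wt v))
    {p : MvPolynomial Var ℚ} {m : ℕ} (hp : IsWeightedHomogeneous wt p m) :
    IsWeightedHomogeneous w' (aeval g p) m := by
  rw [aeval_def, eval₂_eq]
  apply IsWeightedHomogeneous.sum
  intro d hd
  have hdm : Finsupp.weight wt d = m := hp (mem_support_iff.mp hd)
  have h1 : IsWeightedHomogeneous w' (∏ v ∈ d.support, g v ^ d v)
      (∑ v ∈ d.support, d v * wt v) :=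
    IsWeightedHomogeneous.prod _ _ _ (fun v _ => homog_pow (hg v) (d v))
  have h2 : (∑ v ∈ d.support, d v * wt v) = m := by
    rw [← hdm, Finsupp.weight_apply, Finsupp.sum]
    simp [smul_eq_mul]
  have h3 : IsWeightedHomogeneous w'
      ((algebraMap ℚ (MvPolynomial τ ℚ)) (coeff d p) * ∏ v ∈ d.support, g v ^ d v) (0 + m) := by
    rw [MvPolynomial.algebraMap_eq]
    exact (isWeightedHomogeneous_C w' _).mul (h2 ▸ h1)
  rwa [zero_add] at h3

/-- scaling identity for weighted-homogeneous polynomials -/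
lemma aeval_scale {N : ℕ} {w' : Fin N → ℕ} {Q : MvPolynomial (Fin N) ℚ} {m : ℕ}
    (hQ : IsWeightedHomogeneous w' Q m) (lam : ℝ) (Xv : Fin N → ℝ) :
    aeval (fun i => lam ^ w' i * Xv i) Q = lam ^ m * aeval Xv Q := by
  rw [aeval_def, aeval_def, eval₂_eq, eval₂_eq, Finset.mul_sum]
  apply Finset.sum_congr rfl
  intro d hd
  have hdm : Finsupp.weight w' d = m := hQ (mem_support_iff.mp hd)
  have h1 : (∏ i ∈ d.support, (lam ^ w' i * Xv i) ^ d i)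
      = lam ^ m * ∏ i ∈ d.support, Xv i ^ d i := by
    rw [← hdm, Finsupp.weight_apply, Finsupp.sum]
    rw [Finset.prod_congr rfl (fun i _ => mul_pow (lam ^ w' i) (Xv i) (d i)),
      Finset.prod_mul_distrib]
    congr 1
    rw [show (∏ i ∈ d.support, (lam ^ w' i) ^ d i) = ∏ i ∈ d.support, lam ^ (d i * w' i) by
      refine Finset.prod_congr rfl fun i _ => ?_
      rw [← pow_mul, mul_comm]]
    rw [Finset.prod_pow_eq_pow_sum]
    simp [Finsupp.sum, smul_eq_mul, mul_comm]
  rw [h1]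
  ring

lemma deriv2_eq {θ f : ℝ → ℝ} (hf : IsSolution θ f) (t : ℝ) :
    deriv (deriv f) t = -(θ t * f t) := by
  have := hf.2 t; linarith

lemma diff_f {θ f : ℝ → ℝ} (hf : IsSolution θ f) : Differentiable ℝ f :=
  hf.1.differentiable (by simp)

lemma diff_deriv {θ f : ℝ → ℝ} (hf : IsSolution θ f) : Differentiable ℝ (deriv f) :=
  ((contDiff_infty_iff_deriv.mp hf.1).2).differentiable (by simp)

lemma diff_iteratedDeriv {θ : ℝ → ℝ} (hθ : ContDiff ℝ (⊤ : ℕ∞) θ) (r : ℕ) :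
    Differentiable ℝ (iteratedDeriv r θ) :=
  hθ.differentiable_iteratedDeriv r (by exact_mod_cast WithTop.coe_lt_top r)

lemma wronskian_const {θ f₁ f₂ : ℝ → ℝ} (h₁ : IsSolution θ f₁) (h₂ : IsSolution θ f₂)
    (t x : ℝ) :
    f₁ t * deriv f₂ t - deriv f₁ t * f₂ t = f₁ x * deriv f₂ x - deriv f₁ x * f₂ x := by
  have H : ∀ y, HasDerivAt (fun z => f₁ z * deriv f₂ z - deriv f₁ z * f₂ z) 0 y := by
    intro y
    have d1 : HasDerivAt f₁ (deriv f₁ y) y := (diff_f h₁ y).hasDerivAt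
    have d2 : HasDerivAt f₂ (deriv f₂ y) y := (diff_f h₂ y).hasDerivAt
    have d1' : HasDerivAt (deriv f₁) (-(θ y * f₁ y)) y := by
      have h := (diff_deriv h₁ y).hasDerivAt
      rwa [deriv2_eq h₁ y] at h
    have d2' : HasDerivAt (deriv f₂) (-(θ y * f₂ y)) y := by
      have h := (diff_deriv h₂ y).hasDerivAt
      rwa [deriv2_eq h₂ y] at h
    have h := (d1.fun_mul d2').fun_sub (d1'.fun_mul d2)
    refine h.congr_deriv ?_
    ring
  exact is_const_of_deriv_eq_zero (fun y => (H y).differentiableAt) (fun y => (H y).deriv) t x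

open Var

/-- the evaluation assignment attached to `θ` and `u` at `t` -/
def ev (θ u : ℝ → ℝ) (t : ℝ) : Var → ℝ
  | vA => u t
  | vV => (u t)⁻¹
  | vB => deriv u t
  | vC r => iteratedDeriv r θ t

lemma key (θ u : ℝ → ℝ) (hθ : ContDiff ℝ (⊤ : ℕ∞) θ) (hu : IsSolution θ u) :
    ∀ (k : ℕ) (t : ℝ), u t ≠ 0 →
      iteratedDeriv k (fun y => ((u y)⁻¹) ^ 2) t = aeval (ev θ u t) (P k) := by
  intro k
  induction k with
  | zero =>
    intro t ht
    simp [P, ev, iteratedDeriv_zero]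
  | succ k ih =>
    intro t ht
    have hO : IsOpen {y : ℝ | u y ≠ 0} :=
      (diff_f hu).continuous.isOpen_preimage {x | x ≠ 0} isOpen_ne
    have hmem : {y : ℝ | u y ≠ 0} ∈ nhds t := hO.mem_nhds ht
    rw [iteratedDeriv_succ]
    have heq : iteratedDeriv k (fun y => ((u y)⁻¹) ^ 2)
        =ᶠ[nhds t] fun y => aeval (ev θ u y) (P k) := by
      filter_upwards [hmem] with y hy using ih y hy
    rw [heq.deriv_eq]
    have hder : HasDerivAt (fun y => aeval (ev θ u y) (P k)) (aeval (ev θ u t) (D (P k))) t := by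
      apply hasDerivAt_aeval
      intro v
      cases v with
      | vA =>
        have h := (diff_f hu t).hasDerivAt
        simp only [ev, dX, aeval_X]
        exact h
      | vV =>
        have h1 := ((diff_f hu t).hasDerivAt).fun_inv ht
        simp only [ev, dX, map_neg, map_mul, map_pow, aeval_X]
        refine h1.congr_deriv ?_
        field_simp
      | vB =>
        have h1 := (diff_deriv hu t).hasDerivAt
        rw [deriv2_eq hu t] at h1
        simp only [ev, dX, map_neg, map_mul, aeval_X, iteratedDeriv_zero]
        exact h1
      | vC r =>
        have h1 := (diff_iteratedDeriv hθ r t).hasDerivAt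
        simp only [ev, dX, aeval_X]
        rw [iteratedDeriv_succ]
        exact h1
    rw [hder.deriv]
    rfl


open Var in
/-- the substitution assigning the fundamental-pair values at the base point -/
def gsub (N : ℕ) : Var → MvPolynomial (Fin N) ℚ
  | vA => 1
  | vV => 1
  | vB => 0
  | vC r => if h : r < N then X ⟨r, h⟩ else 0

lemma gsub_homog (N : ℕ) (v : Var) :
    IsWeightedHomogeneous (fun i : Fin N => i.1 + 2) (gsub N v) (wt v) := by
  cases v with
  | vA => exact isWeightedHomogeneous_one ℚ _
  | vV => exact isWeightedHomogeneous_one ℚ _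
  | vB => exact isWeightedHomogeneous_zero ℚ _ _
  | vC r =>
    by_cases h : r < N
    · simp only [gsub, dif_pos h]
      exact isWeightedHomogeneous_X ℚ _ _
    · simp only [gsub, dif_neg h]
      exact isWeightedHomogeneous_zero ℚ _ _

end Stmt8Aux
end

noncomputable section

open MeasureTheory Filter
open Stmt8Aux

/-- For every `n ≥ 3` there is a polynomial `π_n ∈ ℚ[X₀,…,X_{n-3}]` such
that (i) `𝒮_n^θ(x) = π_n(θ(x), θ'(x), …, θ^{(n-3)}(x))` for every smooth θ and every
`x`, and (ii) `π_n` is isobaric of weight `n-1`: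
`π_n(λ²X₀, λ³X₁, …, λ^{n-1}X_{n-3}) = λ^{n-1}·π_n(X₀, …, X_{n-3})`. -/
theorem stmt8 (n : ℕ) (hn : 3 ≤ n) :
    ∃ P : MvPolynomial (Fin (n - 2)) ℚ,
      (∀ θ : ℝ → ℝ, ContDiff ℝ (⊤ : ℕ∞) θ →
        ∀ (x : ℝ) (f₁ f₂ : ℝ → ℝ), IsFundPair θ x f₁ f₂ →
          iteratedDeriv n (fun t => f₂ t / f₁ t) x =
            MvPolynomial.aeval (fun i : Fin (n - 2) => iteratedDeriv i.1 θ x) P) ∧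
      (∀ (lam : ℝ) (X : Fin (n - 2) → ℝ),
        MvPolynomial.aeval (fun i : Fin (n - 2) => lam ^ (i.1 + 2) * X i) P =
          lam ^ (n - 1) * MvPolynomial.aeval X P) := by
  obtain ⟨m, rfl⟩ : ∃ m, n = m + 3 := ⟨n - 3, by omega⟩
  clear hn
  refine ⟨MvPolynomial.aeval (gsub (m + 3 - 2)) (Stmt8Aux.P (m + 2)), ?_, ?_⟩
  · rintro θ hθ x f₁ f₂ ⟨h1, h2, hx1, hx1', hx2, hx2'⟩
    have hW : ∀ t, f₁ t * deriv f₂ t - deriv f₁ t * f₂ t = 1 := by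
      intro t
      rw [wronskian_const h1 h2 t x, hx1, hx1', hx2, hx2']
      ring
    have hx0 : f₁ x ≠ 0 := by rw [hx1]; exact one_ne_zero
    have hO : IsOpen {y : ℝ | f₁ y ≠ 0} :=
      (diff_f h1).continuous.isOpen_preimage {z | z ≠ 0} isOpen_ne
    have hdh : ∀ t, f₁ t ≠ 0 → deriv (fun y => f₂ y / f₁ y) t = ((f₁ t)⁻¹) ^ 2 := by
      intro t ht
      have hd := ((diff_f h2 t).hasDerivAt.fun_div (diff_f h1 t).hasDerivAt ht)
      rw [hd.deriv, inv_pow,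
        show deriv f₂ t * f₁ t - f₂ t * deriv f₁ t = 1 by linarith [hW t], one_div]
    show iteratedDeriv (m + 2 + 1) (fun t => f₂ t / f₁ t) x = _
    rw [iteratedDeriv_succ']
    have heq : deriv (fun y => f₂ y / f₁ y) =ᶠ[nhds x] fun y => ((f₁ y)⁻¹) ^ 2 := by
      filter_upwards [hO.mem_nhds hx0] with y hy using hdh y hy
    rw [heq.iteratedDeriv_eq (m + 2)]
    rw [key θ f₁ hθ h1 (m + 2) x hx0]
    have hcomp : (MvPolynomial.aeval fun i : Fin (m + 3 - 2) => iteratedDeriv i.1 θ x)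
          ((MvPolynomial.aeval (gsub (m + 3 - 2))) (Stmt8Aux.P (m + 2)))
        = MvPolynomial.aeval
            (fun v => MvPolynomial.aeval (fun i : Fin (m + 3 - 2) => iteratedDeriv i.1 θ x)
              (gsub (m + 3 - 2) v)) (Stmt8Aux.P (m + 2)) :=
      MvPolynomial.comp_aeval_apply _ _ _
    rw [hcomp]
    apply aeval_congr_wt (P_homog (m + 2))
    intro v hv
    cases v with
    | vA => simp [Stmt8Aux.ev, gsub, hx1]
    | vV => simp [Stmt8Aux.ev, gsub, hx1]
    | vB => simp [Stmt8Aux.ev, gsub, hx1']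
    | vC r =>
      have hr : r < m + 1 := by
        simp only [Stmt8Aux.wt] at hv
        omega
      simp [Stmt8Aux.ev, gsub, dif_pos hr, Nat.lt_succ_iff.mp hr]
  · intro lam Xv
    have hom := aeval_homog_poly (gsub (m + 3 - 2)) (fun i : Fin (m + 3 - 2) => i.1 + 2)
      (gsub_homog _) (P_homog (m + 2))
    exact aeval_scale hom lam Xv


end
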